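/- Let S be a monoid. Every cyclic S-act is cancellable: if A is an S-act generated by a single element (A = aS for some a ∈ A) and B, C are S-acts with A ⊔ B ≅ A ⊔ C, then B ≅ C. -/

import Mathlib

universe u v w

/-- A right `S`-act structure on a type `A`: a map `A × S → A`, `(a, s) ↦ a · s`,
with `a · 1 = a` and `a · (s*t) = (a · s) · t`. (`S`-acts are additionally required
to be nonempty; this is imposed via `Nonempty` hypotheses.) -/
class RAct (S : Type u) [Monoid S] (A : Type v) : Type (max u v) where
  act : A → S → A
  act_one : ∀ a : A, act a 1 = a
  act_mul : ∀ (a : A) (s t : S), act a (s * t) = act (act a s) t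

/-- Isomorphism of `S`-acts: a bijective action-preserving map. -/
def ActIso (S : Type u) [Monoid S] (A : Type v) (B : Type w) [RAct S A] [RAct S B] : Prop :=
  ∃ e : A ≃ B, ∀ (a : A) (s : S), e (RAct.act a s) = RAct.act (e a) s

/-- The coproduct (disjoint union) of two `S`-acts, with componentwise action. -/
instance sumRAct (S : Type u) [Monoid S] (A : Type v) (B : Type w) [RAct S A] [RAct S B] :
    RAct S (A ⊕ B) where
  act x s := Sum.map (fun a => RAct.act a s) (fun b => RAct.act b s) x
  act_one := by rintro (a | b) <;> simp [RAct.act_one]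
  act_mul := by rintro (a | b) s t <;> simp [RAct.act_mul]

/-- An `S`-act `A` is cancellable if `A ⊔ B ≅ A ⊔ C` implies `B ≅ C`
for all `S`-acts `B`, `C`. -/
def Cancellable (S : Type u) [Monoid S] (A : Type u) [RAct S A] : Prop :=
  ∀ (B C : Type u) [RAct S B] [RAct S C] [Nonempty B] [Nonempty C],
    ActIso S (A ⊕ B) (A ⊕ C) → ActIso S B C

/-- Every cyclic `S`-act is cancellable. -/
theorem cyclic_cancellable (S : Type u) [Monoid S] (A : Type u) [RAct S A]
    (hA : ∃ a : A, ∀ x : A, ∃ s : S, x = RAct.act a s)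
    (B C : Type u) [RAct S B] [RAct S C] [Nonempty B] [Nonempty C]
    (h : ActIso S (A ⊕ B) (A ⊕ C)) : ActIso S B C := by
  classical
  obtain ⟨a, ha⟩ := hA
  obtain ⟨e, he⟩ := h
  have he' : ∀ (y : A ⊕ C) (s : S), e.symm (RAct.act y s) = RAct.act (e.symm y) s := by
    intro y s
    apply e.injective
    rw [Equiv.apply_symm_apply, he, Equiv.apply_symm_apply]
  have actABinl : ∀ (x : A) (s : S),
      RAct.act (Sum.inl x : A ⊕ B) s = Sum.inl (RAct.act x s) := fun _ _ => rfl
  have actABinr : ∀ (b : B) (s : S),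
      RAct.act (Sum.inr b : A ⊕ B) s = Sum.inr (RAct.act b s) := fun _ _ => rfl
  have actACinl : ∀ (x : A) (s : S),
      RAct.act (Sum.inl x : A ⊕ C) s = Sum.inl (RAct.act x s) := fun _ _ => rfl
  have actACinr : ∀ (c : C) (s : S),
      RAct.act (Sum.inr c : A ⊕ C) s = Sum.inr (RAct.act c s) := fun _ _ => rfl
  -- Key lemma H: if `e.symm` sends `inl x` into `B`, then `e` sends `inl x` into `C`.
  have H : ∀ (x : A) (b : B), e.symm (Sum.inl x) = Sum.inr b →
      ∃ c : C, e (Sum.inl x) = Sum.inr c := by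
    intro x b hx
    obtain ⟨s, rfl⟩ := ha x
    rcases h2 : e.symm (Sum.inl a) with a₁ | b₀
    · exfalso
      have h3 := he' (Sum.inl a) s
      rw [actACinl, h2, actABinl] at h3
      rw [hx] at h3
      exact nomatch h3
    · rcases h1 : e (Sum.inl a) with a' | c₀
      · exfalso
        have h3 : e.symm (Sum.inl a') = Sum.inl a := by
          rw [← h1, Equiv.symm_apply_apply]
        obtain ⟨t, ht⟩ := ha a'
        have h4 := he' (Sum.inl a) t
        rw [actACinl, h2, actABinr, ← ht, h3] at h4
        exact nomatch h4
      · refine ⟨RAct.act c₀ s, ?_⟩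
        have h3 := he (Sum.inl a) s
        rw [actABinl, h1, actACinr] at h3
        exact h3
  -- Key lemma H': if `e` sends `inl x` into `C`, then `e.symm` sends `inl x` into `B`.
  have H' : ∀ (x : A) (c : C), e (Sum.inl x) = Sum.inr c →
      ∃ b : B, e.symm (Sum.inl x) = Sum.inr b := by
    intro x c hx
    obtain ⟨s, rfl⟩ := ha x
    rcases h1 : e (Sum.inl a) with a' | c₀
    · exfalso
      have h3 := he (Sum.inl a) s
      rw [actABinl, h1, actACinl] at h3
      rw [hx] at h3
      exact nomatch h3
    · rcases h2 : e.symm (Sum.inl a) with a₁ | b₀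
      · exfalso
        have h3 : e (Sum.inl a₁) = Sum.inl a := by
          rw [← h2, Equiv.apply_symm_apply]
        obtain ⟨t, ht⟩ := ha a₁
        have h4 := he (Sum.inl a) t
        rw [actABinl, h1, actACinr, ← ht, h3] at h4
        exact nomatch h4
      · refine ⟨RAct.act b₀ s, ?_⟩
        have h3 := he' (Sum.inl a) s
        rw [actACinl, h2, actABinr] at h3
        exact h3
  -- the maps
  set f : B → C := fun b =>
    Sum.elim (fun x => Sum.elim (fun _ => Classical.arbitrary C) id (e (Sum.inl x))) id
      (e (Sum.inr b)) with hf
  set g : C → B := fun c =>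
    Sum.elim (fun x => Sum.elim (fun _ => Classical.arbitrary B) id (e.symm (Sum.inl x))) id
      (e.symm (Sum.inr c)) with hg
  have hf1 : ∀ (b : B) (c : C), e (Sum.inr b) = Sum.inr c → f b = c := by
    intro b c hb; simp [hf, hb]
  have hf2 : ∀ (b : B) (x : A) (c : C), e (Sum.inr b) = Sum.inl x →
      e (Sum.inl x) = Sum.inr c → f b = c := by
    intro b x c hb hx; simp [hf, hb, hx]
  have hg1 : ∀ (c : C) (b : B), e.symm (Sum.inr c) = Sum.inr b → g c = b := by
    intro c b hc; simp [hg, hc]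
  have hg2 : ∀ (c : C) (x : A) (b : B), e.symm (Sum.inr c) = Sum.inl x →
      e.symm (Sum.inl x) = Sum.inr b → g c = b := by
    intro c x b hc hx; simp [hg, hc, hx]
  have linv : ∀ b : B, g (f b) = b := by
    intro b
    rcases hb : e (Sum.inr b) with x | c
    · have hsx : e.symm (Sum.inl x) = Sum.inr b := by
        rw [← hb, Equiv.symm_apply_apply]
      obtain ⟨c, hc⟩ := H x b hsx
      rw [hf2 b x c hb hc]
      have hsc : e.symm (Sum.inr c) = Sum.inl x := by
        rw [← hc, Equiv.symm_apply_apply]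
      exact hg2 c x b hsc hsx
    · rw [hf1 b c hb]
      exact hg1 c b (by rw [← hb, Equiv.symm_apply_apply])
  have rinv : ∀ c : C, f (g c) = c := by
    intro c
    rcases hc : e.symm (Sum.inr c) with x | b
    · have hsx : e (Sum.inl x) = Sum.inr c := by
        rw [← hc, Equiv.apply_symm_apply]
      obtain ⟨b, hb⟩ := H' x c hsx
      rw [hg2 c x b hc hb]
      have hsb : e (Sum.inr b) = Sum.inl x := by
        rw [← hb, Equiv.apply_symm_apply]
      exact hf2 b x c hsb hsx
    · rw [hg1 c b hc]
      exact hf1 b c (by rw [← hc, Equiv.apply_symm_apply])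
  refine ⟨⟨f, g, linv, rinv⟩, ?_⟩
  intro b s
  show f (RAct.act b s) = RAct.act (f b) s
  rcases hb : e (Sum.inr b) with x | c
  · have hsx : e.symm (Sum.inl x) = Sum.inr b := by
      rw [← hb, Equiv.symm_apply_apply]
    obtain ⟨c, hc⟩ := H x b hsx
    rw [hf2 b x c hb hc]
    have h1 : e (Sum.inr (RAct.act b s)) = Sum.inl (RAct.act x s) := by
      have h3 := he (Sum.inr b) s
      rw [actABinr, hb, actACinl] at h3
      exact h3
    have h2 : e (Sum.inl (RAct.act x s)) = Sum.inr (RAct.act c s) := by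
      have h3 := he (Sum.inl x) s
      rw [actABinl, hc, actACinr] at h3
      exact h3
    exact hf2 _ _ _ h1 h2
  · rw [hf1 b c hb]
    have h1 : e (Sum.inr (RAct.act b s)) = Sum.inr (RAct.act c s) := by
      have h3 := he (Sum.inr b) s
      rw [actABinr, hb, actACinr] at h3
      exact h3
    exact hf1 _ _ h1
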